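/- For every odd prime p different from 5, p divides F_{(p^2-1)/2}. -/

import Mathlib

open Polynomial

section Aux
variable (p : ℕ) [Fact p.Prime]

noncomputable def qpoly : (ZMod p)[X] := X ^ 2 - X - 1

lemma qpoly_degree : (qpoly p).degree = 2 := by
  unfold qpoly
  compute_degree!

noncomputable abbrev Rring := AdjoinRoot (qpoly p)

lemma of_inj : Function.Injective (AdjoinRoot.of (qpoly p)) :=
  AdjoinRoot.of.injective_of_degree_ne_zero (by rw [qpoly_degree]; decide)

noncomputable def phi : Rring p := AdjoinRoot.root (qpoly p)

lemma phi_sq : (phi p) ^ 2 = phi p + 1 := by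
  have h := AdjoinRoot.eval₂_root (qpoly p)
  unfold qpoly at h
  simp at h
  unfold phi qpoly
  exact eq_add_of_sub_eq' (sub_eq_zero.mp h)

lemma fib_identity (n : ℕ) :
    (phi p) ^ n - (1 - phi p) ^ n = (Nat.fib n : Rring p) * (2 * phi p - 1) := by
  induction n using Nat.twoStepInduction with
  | zero => simp
  | one => simp; ring
  | more n ih1 ih2 =>
    have h2 : (1 - phi p) ^ 2 = (1 - phi p) + 1 := by linear_combination phi_sq p
    rw [Nat.fib_add_two]
    push_cast
    calc (phi p) ^ (n + 2) - (1 - phi p) ^ (n + 2)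
        = ((phi p)^(n+1) - (1-phi p)^(n+1)) + ((phi p)^n - (1-phi p)^n) := by
          have := phi_sq p
          ring_nf
          linear_combination (phi p)^n * (phi_sq p) - (1 - phi p)^n * h2
      _ = (Nat.fib (n+1) : Rring p) * (2 * phi p - 1) + (Nat.fib n : Rring p) * (2 * phi p - 1) := by
          rw [ih2, ih1]
      _ = ((Nat.fib n : Rring p) + (Nat.fib (n+1) : Rring p)) * (2 * phi p - 1) := by ring

end Aux

section Aux2
variable (p : ℕ) [Fact p.Prime]

noncomputable instance : CharP (Rring p) p :=
  charP_of_injective_ringHom (of_inj p) p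

lemma s_sq : (2 * phi p - 1) ^ 2 = 5 := by
  linear_combination (4 : Rring p) * phi_sq p

lemma phi_pow_p (hodd : Odd p) (h5 : p ≠ 5) :
    (phi p) ^ p = phi p ∨ (phi p) ^ p = 1 - phi p := by
  have hp : p.Prime := Fact.out
  set s : Rring p := 2 * phi p - 1 with hs
  set ε : ZMod p := (5 : ZMod p) ^ ((p - 1) / 2) with hε
  have h5z : (5 : ZMod p) ≠ 0 := by
    intro h
    have h' : ((5:ℕ) : ZMod p) = 0 := by push_cast; exact h
    rw [ZMod.natCast_eq_zero_iff] at h'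
    exact h5 ((Nat.prime_dvd_prime_iff_eq hp (by norm_num)).mp h')
  have hε2 : ε * ε = 1 := by
    rw [hε, ← pow_add]
    have : (p - 1) / 2 + (p - 1) / 2 = p - 1 := by
      obtain ⟨k, hk⟩ := hodd; omega
    rw [this]
    exact ZMod.pow_card_sub_one_eq_one h5z
  have hsp : s ^ p = AdjoinRoot.of (qpoly p) ε * s := by
    have h1 : s ^ p = (s ^ 2) ^ ((p - 1) / 2) * s := by
      rw [← pow_mul, ← pow_succ]
      congr 1
      obtain ⟨k, hk⟩ := hodd; omega
    rw [h1, s_sq]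
    congr 1
    rw [hε, map_pow, map_ofNat]
  have hfrob : s ^ p = 2 * (phi p) ^ p - 1 := by
    have := map_sub (frobenius (Rring p) p) (2 * phi p) 1
    simp only [frobenius_def, map_mul, map_one] at this
    rw [hs, this]
    congr 1
    have h2p : (2 : Rring p) ^ p = 2 := by
      have hz : ((2:ZMod p)) ^ p = 2 := ZMod.pow_card 2
      calc (2:Rring p) ^ p = AdjoinRoot.of (qpoly p) ((2:ZMod p) ^ p) := by
            rw [map_pow, map_ofNat]
        _ = 2 := by rw [hz, map_ofNat]
    rw [h2p]
  have h2u : IsUnit (2 : Rring p) := by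
    have h2z : (2 : ZMod p) ≠ 0 := by
      intro h
      have h' : ((2:ℕ) : ZMod p) = 0 := by push_cast; exact h
      rw [ZMod.natCast_eq_zero_iff] at h'
      have hp2 : p = 2 := (Nat.prime_dvd_prime_iff_eq hp Nat.prime_two).mp h'
      obtain ⟨k, hk⟩ := hodd
      omega
    have : IsUnit (2 : ZMod p) := isUnit_iff_ne_zero.mpr h2z
    have := this.map (AdjoinRoot.of (qpoly p))
    rw [map_ofNat] at this; exact this
  rcases mul_self_eq_one_iff.mp hε2 with h1 | h1
  · left
    have : 2 * (phi p) ^ p - 1 = 2 * phi p - 1 := by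
      rw [← hfrob, hsp, h1, map_one, one_mul, hs]
    have h2 : (2 : Rring p) * (phi p) ^ p = 2 * phi p := by linear_combination this
    exact h2u.mul_left_cancel h2
  · right
    have : 2 * (phi p) ^ p - 1 = -(2 * phi p - 1) := by
      rw [← hfrob, hsp, h1, map_neg, map_one, hs]; ring
    have h2 : (2 : Rring p) * (phi p) ^ p = 2 * (1 - phi p) := by linear_combination this
    exact h2u.mul_left_cancel h2

lemma psi_pow : ∀ x : Rring p, (1 - x) ^ p = 1 - x ^ p := by
  intro x
  have := map_sub (frobenius (Rring p) p) 1 x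
  simpa [frobenius_def] using this

lemma phi_pow_p2 (hodd : Odd p) (h5 : p ≠ 5) : (phi p) ^ (p ^ 2) = phi p := by
  have h : (phi p) ^ (p ^ 2) = ((phi p) ^ p) ^ p := by rw [← pow_mul, sq]
  rcases phi_pow_p p hodd h5 with h1 | h1
  · rw [h, h1, h1]
  · rw [h, h1, psi_pow p, h1]; ring

end Aux2

theorem prime_dvd_fib (p : ℕ) (hp : p.Prime) (hodd : Odd p) (h5 : p ≠ 5) :
    p ∣ Nat.fib ((p ^ 2 - 1) / 2) := by
  haveI : Fact p.Prime := ⟨hp⟩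
  set N := (p ^ 2 - 1) / 2 with hN
  obtain ⟨k, hk⟩ := hodd
  have hsq : p ^ 2 = 4 * (k * k + k) + 1 := by subst hk; ring
  have h2N : 2 * N = p ^ 2 - 1 := by omega
  have hNeven : Even N := by
    refine ⟨k * k + k, by omega⟩
  -- phi and psi are units
  have huphi : IsUnit (phi p) := by
    apply IsUnit.of_mul_eq_one (phi p - 1)
    linear_combination phi_sq p
  have hupsi : IsUnit (1 - phi p) := by
    apply IsUnit.of_mul_eq_one (-(phi p))
    linear_combination phi_sq p
  have hphi1 : (phi p) ^ (p ^ 2 - 1) = 1 := by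
    have h := phi_pow_p2 p ⟨k, hk⟩ h5
    have hrw : (phi p) ^ (p ^ 2) = (phi p) ^ (p ^ 2 - 1) * phi p := by
      rw [← pow_succ]
      congr 1
      omega
    rw [hrw] at h
    nth_rewrite 3 [← one_mul (phi p)] at h
    exact huphi.mul_right_cancel h
  have hphi2 : (phi p) ^ (p ^ 2) = phi p := phi_pow_p2 p ⟨k, hk⟩ h5
  have hpsip2 : (1 - phi p) ^ (p ^ 2) = 1 - phi p := by
    have : (1 - phi p) ^ (p ^ 2) = ((1 - phi p) ^ p) ^ p := by rw [← pow_mul, sq]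
    rw [this, psi_pow p, psi_pow p, ← pow_mul, ← sq, hphi2]
  have hpsi1 : (1 - phi p) ^ (p ^ 2 - 1) = 1 := by
    have hrw : (1 - phi p) ^ (p ^ 2) = (1 - phi p) ^ (p ^ 2 - 1) * (1 - phi p) := by
      rw [← pow_succ]
      congr 1
      omega
    rw [hrw] at hpsip2
    nth_rewrite 3 [← one_mul (1 - phi p)] at hpsip2
    exact hupsi.mul_right_cancel hpsip2
  set u := (phi p) ^ N with hu
  set v := (1 - phi p) ^ N with hv
  have hu2 : u * u = 1 := by
    rw [hu, ← pow_add]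
    have : N + N = p ^ 2 - 1 := by omega
    rw [this, hphi1]
  have huv : u * v = 1 := by
    rw [hu, hv, ← mul_pow]
    have hm1 : phi p * (1 - phi p) = -1 := by linear_combination -phi_sq p
    rw [hm1]
    exact hNeven.neg_one_pow
  have huveq : u = v := by
    calc u = u * (u * v) := by rw [huv, mul_one]
      _ = (u * u) * v := by ring
      _ = v := by rw [hu2, one_mul]
  have hz : (Nat.fib N : Rring p) * (2 * phi p - 1) = 0 := by
    rw [← fib_identity p N, ← hu, ← hv, huveq, sub_self]
  have hz5 : (Nat.fib N : Rring p) * 5 = 0 := by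
    linear_combination (2 * phi p - 1) * hz - (Nat.fib N : Rring p) * s_sq p
  have hmap : AdjoinRoot.of (qpoly p) ((Nat.fib N : ZMod p) * 5) = AdjoinRoot.of (qpoly p) 0 := by
    rw [map_mul, map_natCast, map_ofNat, map_zero, hz5]
  have hzz : (Nat.fib N : ZMod p) * 5 = 0 := of_inj p hmap
  have h5z : (5 : ZMod p) ≠ 0 := by
    intro h
    have h' : ((5:ℕ) : ZMod p) = 0 := by push_cast; exact h
    rw [ZMod.natCast_eq_zero_iff] at h'
    exact h5 ((Nat.prime_dvd_prime_iff_eq hp (by norm_num)).mp h')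
  have : (Nat.fib N : ZMod p) = 0 := by
    rcases mul_eq_zero.mp hzz with h | h
    · exact h
    · exact absurd h h5z
  exact (ZMod.natCast_eq_zero_iff _ _).mp this
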